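/- Let X be a sober topological space and let f : X → ℕ be a function such that for every k ∈ ℕ the set {x ∈ X : f(x) ≥ k} is closed in X. For a nonempty irreducible closed subset Z ⊆ X, define its codimension codim(Z) as the coheight of Z in the partially ordered set of nonempty irreducible closed subsets of X ordered by inclusion. Then the following are equivalent: (i) for every δ ∈ ℕ, every irreducible component T of the locally closed set S_δ := {x ∈ X : f(x) = δ} satisfies codim(closure of T) ≥ δ; (ii) for every nonempty irreducible closed subset Z ⊆ X with generic point η, one has codim(Z) ≥ f(η). -/
import Mathlib

open TopologicalSpace

/-- Zorn: every irreducible subset of `s` is contained in a maximal irreducible subset of `s`. -/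
lemma exists_maximal_irreducible_subset {X : Type*} [TopologicalSpace X] (s t : Set X)
    (ht : t ⊆ s) (hirr : IsIrreducible t) :
    ∃ T : Set X, t ⊆ T ∧ Maximal (fun u : Set X => u ⊆ s ∧ IsIrreducible u) T := by
  obtain ⟨m, hm, htm⟩ := zorn_subset_nonempty {u : Set X | u ⊆ s ∧ IsIrreducible u}
    (fun c hc hcc ⟨w, hw⟩ => by
      refine ⟨⋃₀ c, ⟨Set.sUnion_subset fun u hu => (hc hu).1, ?_, ?_⟩,
        fun _ hxc => Set.subset_sUnion_of_mem hxc⟩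
      · exact ⟨(hc hw).2.1.choose, Set.mem_sUnion_of_mem (hc hw).2.1.choose_spec hw⟩
      · intro u v hu hv ⟨y, hy, hyu⟩ ⟨x, hx, hxv⟩
        obtain ⟨p, hpc, hyp⟩ := Set.mem_sUnion.1 hy
        obtain ⟨q, hqc, hxq⟩ := Set.mem_sUnion.1 hx
        rcases hcc.total hpc hqc with hpq | hqp
        · obtain ⟨z, hzp, hzuv⟩ := (hc hqc).2.2 u v hu hv ⟨y, hpq hyp, hyu⟩ ⟨x, hxq, hxv⟩
          exact ⟨z, Set.mem_sUnion_of_mem hzp hqc, hzuv⟩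
        · obtain ⟨z, hzp, hzuv⟩ := (hc hpc).2.2 u v hu hv ⟨y, hyp, hyu⟩ ⟨x, hqp hxq, hxv⟩
          exact ⟨z, Set.mem_sUnion_of_mem hzp hpc, hzuv⟩) t ⟨ht, hirr⟩
  exact ⟨m, hm, htm⟩

/-- Characterization of δ-regularity (Lemma 2.18): for an upper semicontinuous `f : X → ℕ` on a
sober space, the condition that every irreducible component `T` of each δ-locus
`S_δ = {f = δ}` satisfies `codim (closure T) ≥ δ` is equivalent to the condition that every
nonempty irreducible closed subset `Z` with generic point `η` satisfies `codim Z ≥ f η`,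
where the codimension of an irreducible closed subset is its coheight in the poset of
irreducible closed subsets ordered by inclusion. -/
theorem delta_regularity_tfae {X : Type*} [TopologicalSpace X] [QuasiSober X] [T0Space X]
    (f : X → ℕ) (hf : ∀ k : ℕ, IsClosed {x : X | k ≤ f x}) :
    (∀ δ : ℕ, ∀ T : Set X,
        (hT : Maximal (fun t : Set X => t ⊆ {x | f x = δ} ∧ IsIrreducible t) T) →
        (δ : ℕ∞) ≤ Order.coheight
          (⟨closure T, hT.prop.2.closure, isClosed_closure⟩ : IrreducibleCloseds X)) ↔
    (∀ Z : IrreducibleCloseds X, ∀ η : X, closure {η} = (Z : Set X) →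
        (f η : ℕ∞) ≤ Order.coheight Z) := by
  constructor
  · intro h Z η hη
    set δ := f η with hδ
    have hηS : ({η} : Set X) ⊆ {x | f x = δ} := by
      simp [Set.singleton_subset_iff, hδ]
    obtain ⟨T, hηT, hT⟩ := exists_maximal_irreducible_subset {x | f x = δ} {η} hηS
      isIrreducible_singleton
    have h1 := h δ T hT
    have hle : Z ≤ (⟨closure T, hT.prop.2.closure, isClosed_closure⟩ : IrreducibleCloseds X) := by
      show (Z : Set X) ⊆ closure T
      rw [← hη]
      exact closure_mono (Set.singleton_subset_iff.2 (hηT rfl))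
    exact le_trans h1 (Order.coheight_anti hle)
  · intro h δ T hT
    obtain ⟨η, hη⟩ := QuasiSober.sober hT.prop.2.closure isClosed_closure
    have hηT : η ∈ closure T := hη ▸ subset_closure rfl
    have hfη : δ ≤ f η := by
      have : closure T ⊆ {x | δ ≤ f x} := by
        apply closure_minimal _ (hf δ)
        intro x hx
        exact le_of_eq (hT.prop.1 hx).symm
      exact this hηT
    have := h (⟨closure T, hT.prop.2.closure, isClosed_closure⟩ : IrreducibleCloseds X) η hη
    calc (δ : ℕ∞) ≤ (f η : ℕ∞) := by exact_mod_cast hfη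
      _ ≤ _ := this
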